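/- arXiv:1112.2861 — 2 statements merged into one kernel-verified Lean document; each statement's English description precedes it below -/
import Mathlib

section
/- Let n ≥ 2 and let f : 2^N → {0,1} satisfy f(∅) = 0 and f(N) = 1, where N = {1,…,n}. Then f is (n−1)-roughly weighted, i.e. μ(f) ≤ n − 1. Moreover, for every n ≥ 3 this bound is tight: there exists such a function f with μ(f) = n − 1. -/
open Finset

/-- `f` is `α`-roughly weighted: there are real weights such that every winning
coalition has weight at least `1` and every losing coalition weight at most `α`. -/
def RoughlyWeighted {n : ℕ} (f : Finset (Fin n) → Bool) (α : ℝ) : Prop :=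
  ∃ w : Fin n → ℝ,
    (∀ S : Finset (Fin n), f S = true → 1 ≤ ∑ i ∈ S, w i) ∧
    (∀ S : Finset (Fin n), f S = false → ∑ i ∈ S, w i ≤ α)

/-- The critical threshold value `μ(f)`: the smallest `α ≥ 1` such that `f` is
`α`-roughly weighted. -/
noncomputable def mu {n : ℕ} (f : Finset (Fin n) → Bool) : ℝ :=
  sInf {α : ℝ | 1 ≤ α ∧ RoughlyWeighted f α}

/-- A simple game: monotone, the empty coalition loses and the grand coalition wins. -/
def SimpleGame {n : ℕ} (χ : Finset (Fin n) → Bool) : Prop :=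
  χ ∅ = false ∧ χ Finset.univ = true ∧
    ∀ S T : Finset (Fin n), S ⊆ T → χ S = true → χ T = true

lemma part1 {n : ℕ} (hn : 2 ≤ n) (f : Finset (Fin n) → Bool) (h0 : f ∅ = false)
    (h1 : f Finset.univ = true) : RoughlyWeighted f ((n : ℝ) - 1) := by
  refine ⟨fun _ => 1, ?_, ?_⟩
  · intro S hS
    have hne : S ≠ ∅ := by rintro rfl; simp [h0] at hS
    have : 1 ≤ S.card := Finset.card_pos.2 (Finset.nonempty_of_ne_empty hne)
    simp only [Finset.sum_const, nsmul_eq_mul, mul_one]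
    exact_mod_cast this
  · intro S hS
    have hne : S ≠ Finset.univ := by rintro rfl; simp [h1] at hS
    have hc : S.card < n := by
      have := (Finset.card_lt_iff_ne_univ S).2 hne
      simpa using this
    simp only [Finset.sum_const, nsmul_eq_mul, mul_one]
    have : (S.card : ℝ) + 1 ≤ n := by exact_mod_cast hc
    linarith

/-- every `f` with `f ∅ = 0` and `f N = 1` on `n ≥ 2` voters is
`(n-1)`-roughly weighted, and for `n ≥ 3` this bound is attained. -/
theorem critical_threshold_grand_coalition_winning (n : ℕ) (hn : 2 ≤ n) :
    (∀ f : Finset (Fin n) → Bool, f ∅ = false → f Finset.univ = true →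
      RoughlyWeighted f ((n : ℝ) - 1)) ∧
    (3 ≤ n → ∃ f : Finset (Fin n) → Bool, f ∅ = false ∧ f Finset.univ = true ∧
      mu f = (n : ℝ) - 1) := by
  constructor
  · exact part1 hn
  · intro h3
    have h0 : (0 : ℕ) < n := by omega
    set i0 : Fin n := ⟨0, h0⟩
    set f : Finset (Fin n) → Bool := fun S => decide (S.card = 1) || decide (S = Finset.univ)
      with hf
    have hne : (∅ : Finset (Fin n)) ≠ Finset.univ := by
      intro h
      have := Finset.mem_univ i0
      rw [← h] at this
      simp at this
    have hf0 : f ∅ = false := by simp [hf, hne]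
    have hf1 : f Finset.univ = true := by simp [hf]
    refine ⟨f, hf0, hf1, ?_⟩
    have hmem : ((n : ℝ) - 1) ∈ {α : ℝ | 1 ≤ α ∧ RoughlyWeighted f α} := by
      refine ⟨by
        have : (2:ℝ) ≤ n := by exact_mod_cast hn
        linarith, part1 hn f hf0 hf1⟩
    refine le_antisymm (csInf_le ⟨1, fun x hx => hx.1⟩ hmem) (le_csInf ⟨_, hmem⟩ ?_)
    rintro α ⟨hα1, w, hw1, hw2⟩
    set S : Finset (Fin n) := Finset.univ.erase i0 with hS
    have hcard : S.card = n - 1 := by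
      rw [hS, Finset.card_erase_of_mem (Finset.mem_univ _), Finset.card_univ, Fintype.card_fin]
    have hSf : f S = false := by
      have h1 : S.card ≠ 1 := by omega
      have h2 : S ≠ Finset.univ := by
        intro h
        have := Finset.mem_univ i0
        rw [← h] at this
        simp [hS] at this
      simp [hf, h1, h2]
    have hle : ∑ i ∈ S, w i ≤ α := hw2 S hSf
    have hge : (S.card : ℝ) ≤ ∑ i ∈ S, w i := by
      calc (S.card : ℝ) = ∑ _i ∈ S, (1:ℝ) := by simp
        _ ≤ ∑ i ∈ S, w i := Finset.sum_le_sum (fun i _ => by simpa using hw1 {i} (by simp [hf]))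
    have hcast : (S.card : ℝ) = (n : ℝ) - 1 := by
      rw [hcard]
      have : (1:ℕ) ≤ n := by omega
      push_cast [this]
      ring
    linarith
end

section
/- Let χ be a complete simple game on n voters whose desirability preorder ⊒ has exactly two equivalence classes of voters. Then μ(χ) ≤ √n + 1; that is, χ is (√n + 1)-roughly weighted. -/
open Finset

/-- Isbell's desirability relation: `i ⊒ j` iff replacing `j` by `i` in any
coalition containing `j` but not `i` preserves winning. -/
def Desirable {n : ℕ} (χ : Finset (Fin n) → Bool) (i j : Fin n) : Prop :=
  ∀ S : Finset (Fin n), j ∈ S → i ∉ S →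
    χ S = true → χ (insert i (S.erase j)) = true

/-- `i □ j`: the voters `i` and `j` are equally desirable. -/
def EquivVoters {n : ℕ} (χ : Finset (Fin n) → Bool) (i j : Fin n) : Prop :=
  Desirable χ i j ∧ Desirable χ j i

set_option maxHeartbeats 1000000 in
private theorem desirable_trans {n : ℕ} {χ : Finset (Fin n) → Bool} {i j k : Fin n}
    (h1 : Desirable χ i j) (h2 : Desirable χ j k) : Desirable χ i k := by
  intro S hkS hiS hS
  by_cases hij : i = j
  · subst hij; exact h2 S hkS hiS hS
  by_cases hjk : j = k
  · subst hjk; exact h1 S hkS hiS hS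
  have hik : i ≠ k := by rintro rfl; exact hiS hkS
  by_cases hjS : j ∈ S
  · have hS' : χ (insert i (S.erase j)) = true := h1 S hjS hiS hS
    have hkS' : k ∈ insert i (S.erase j) := by
      simp [Finset.mem_insert, Finset.mem_erase]
      exact Or.inr ⟨Ne.symm hjk, hkS⟩
    have hjS' : j ∉ insert i (S.erase j) := by
      simp [Finset.mem_insert, Finset.mem_erase]
      exact fun h => absurd h (Ne.symm hij)
    have hres := h2 _ hkS' hjS' hS'
    have heq : insert j ((insert i (S.erase j)).erase k) = insert i (S.erase k) := by
      ext x
      simp only [Finset.mem_insert, Finset.mem_erase]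
      constructor
      · rintro (rfl | ⟨hxk, rfl | ⟨hxj, hxS⟩⟩)
        · exact Or.inr ⟨hjk, hjS⟩
        · exact Or.inl rfl
        · exact Or.inr ⟨hxk, hxS⟩
      · rintro (rfl | ⟨hxk, hxS⟩)
        · exact Or.inr ⟨hik, Or.inl rfl⟩
        · by_cases hxj : x = j
          · exact Or.inl hxj
          · exact Or.inr ⟨hxk, Or.inr ⟨hxj, hxS⟩⟩
    rwa [heq] at hres
  · have hS' : χ (insert j (S.erase k)) = true := h2 S hkS hjS hS
    have hjS' : j ∈ insert j (S.erase k) := Finset.mem_insert_self _ _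
    have hiS' : i ∉ insert j (S.erase k) := by
      simp only [Finset.mem_insert, Finset.mem_erase]
      rintro (rfl | ⟨-, h⟩)
      · exact hij rfl
      · exact hiS h
    have hres := h1 _ hjS' hiS' hS'
    have heq : insert i ((insert j (S.erase k)).erase j) = insert i (S.erase k) := by
      rw [Finset.erase_insert]
      simp only [Finset.mem_erase]
      rintro ⟨-, h⟩; exact hjS h
    rwa [heq] at hres


set_option maxHeartbeats 1000000 in
private theorem winning_mono_counts {n : ℕ} {χ : Finset (Fin n) → Bool}
    (hmono : ∀ S T : Finset (Fin n), S ⊆ T → χ S = true → χ T = true)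
    (A : Finset (Fin n))
    (hTop : ∀ i ∈ A, ∀ j, Desirable χ i j)
    (hBot : ∀ x ∉ A, ∀ y, Desirable χ y x) :
    ∀ (d : ℕ) (T S : Finset (Fin n)), (T \ S).card = d → χ T = true →
      T.card ≤ S.card → (T ∩ A).card ≤ (S ∩ A).card → χ S = true := by
  intro d
  induction d with
  | zero =>
    intro T S hd hT hc _
    have : T ⊆ S := by
      rw [← Finset.sdiff_eq_empty_iff_subset]
      exact Finset.card_eq_zero.mp hd
    exact hmono T S this hT
  | succ d ih =>
    intro T S hd hT hc hcA
    -- pick x ∈ T \ S, preferring x ∈ A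
    have hTS : (T \ S).Nonempty := by
      rw [← Finset.card_pos, hd]; omega
    -- helper: after choosing x ∈ T\S, y ∈ S\T with Desirable y x and the
    -- intersection count invariant, conclude via ih
    have step : ∀ x ∈ T \ S, ∀ y ∈ S \ T, Desirable χ y x →
        ((insert y (T.erase x)) ∩ A).card ≤ (S ∩ A).card → χ S = true := by
      intro x hx y hy hdes hcA'
      rw [Finset.mem_sdiff] at hx hy
      set T' := insert y (T.erase x) with hT'def
      have hT' : χ T' = true := hdes T hx.1 hy.2 hT
      have hyTx : y ∉ T.erase x := fun h => hy.2 (Finset.mem_of_mem_erase h)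
      have hcard : T'.card = T.card := by
        rw [hT'def, Finset.card_insert_of_notMem hyTx,
          Finset.card_erase_of_mem hx.1]
        have : 1 ≤ T.card := Finset.card_pos.mpr ⟨x, hx.1⟩
        omega
      have hdiff : T' \ S = (T \ S).erase x := by
        ext z
        simp only [hT'def, Finset.mem_sdiff, Finset.mem_insert, Finset.mem_erase]
        constructor
        · rintro ⟨rfl | ⟨hzx, hzT⟩, hzS⟩
          · exact absurd hy.1 hzS
          · exact ⟨hzx, hzT, hzS⟩
        · rintro ⟨hzx, hzT, hzS⟩
          exact ⟨Or.inr ⟨hzx, hzT⟩, hzS⟩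
      have hdcard : (T' \ S).card = d := by
        rw [hdiff, Finset.card_erase_of_mem (by rw [Finset.mem_sdiff]; exact hx), hd]; omega
      exact ih T' S hdcard hT' (hcard ▸ hc) hcA'
    by_cases hA : ((T \ S) ∩ A).Nonempty
    · obtain ⟨x, hx⟩ := hA
      rw [Finset.mem_inter] at hx
      have hxTS := hx.1
      rw [Finset.mem_sdiff] at hxTS
      -- find y ∈ (S ∩ A) \ T
      have hy : ((S ∩ A) \ T).Nonempty := by
        by_contra hcon
        rw [Finset.not_nonempty_iff_eq_empty, Finset.sdiff_eq_empty_iff_subset] at hcon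
        have hsub : S ∩ A ⊆ T ∩ A := fun z hz =>
          Finset.mem_inter.mpr ⟨hcon hz, (Finset.mem_inter.mp hz).2⟩
        have hss : S ∩ A ⊂ T ∩ A := by
          refine ⟨hsub, fun h => ?_⟩
          have : x ∈ S ∩ A := h (Finset.mem_inter.mpr ⟨hxTS.1, hx.2⟩)
          exact hxTS.2 (Finset.mem_inter.mp this).1
        exact absurd hcA (not_le.mpr (Finset.card_lt_card hss))
      obtain ⟨y, hy⟩ := hy
      rw [Finset.mem_sdiff, Finset.mem_inter] at hy
      refine step x hx.1 y (Finset.mem_sdiff.mpr ⟨hy.1.1, hy.2⟩)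
        (hTop y hy.1.2 x) ?_
      -- (insert y (T.erase x)) ∩ A = insert y ((T ∩ A).erase x)
      have : (insert y (T.erase x)) ∩ A = insert y ((T ∩ A).erase x) := by
        ext z
        simp only [Finset.mem_inter, Finset.mem_insert, Finset.mem_erase]
        constructor
        · rintro ⟨rfl | ⟨hzx, hzT⟩, hzA⟩
          · exact Or.inl rfl
          · exact Or.inr ⟨hzx, hzT, hzA⟩
        · rintro (rfl | ⟨hzx, hzT, hzA⟩)
          · exact ⟨Or.inl rfl, hy.1.2⟩
          · exact ⟨Or.inr ⟨hzx, hzT⟩, hzA⟩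
      rw [this, Finset.card_insert_of_notMem
        (fun h => hy.2 (Finset.mem_of_mem_erase h |> Finset.mem_inter.mp |>.1)),
        Finset.card_erase_of_mem (Finset.mem_inter.mpr ⟨hxTS.1, hx.2⟩)]
      have : 1 ≤ (T ∩ A).card :=
        Finset.card_pos.mpr ⟨x, Finset.mem_inter.mpr ⟨hxTS.1, hx.2⟩⟩
      omega
    · -- T \ S has no A-elements
      obtain ⟨x, hx⟩ := hTS
      have hxA : x ∉ A := fun h =>
        hA ⟨x, Finset.mem_inter.mpr ⟨hx, h⟩⟩
      have hxTS := Finset.mem_sdiff.mp hx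
      have hST : (S \ T).Nonempty := by
        by_contra hcon
        rw [Finset.not_nonempty_iff_eq_empty, Finset.sdiff_eq_empty_iff_subset] at hcon
        have := Finset.eq_of_subset_of_card_le hcon hc
        rw [this] at hxTS
        exact hxTS.2 hxTS.1
      -- T ∩ A ⊆ S ∩ A in this case
      have hTAS : T ∩ A ⊆ S ∩ A := by
        intro z hz
        rw [Finset.mem_inter] at hz
        refine Finset.mem_inter.mpr ⟨?_, hz.2⟩
        by_contra hzS
        exact hA ⟨z, Finset.mem_inter.mpr ⟨Finset.mem_sdiff.mpr ⟨hz.1, hzS⟩, hz.2⟩⟩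
      by_cases hB : ((S \ T) \ A).Nonempty
      · obtain ⟨y, hy⟩ := hB
        rw [Finset.mem_sdiff] at hy
        refine step x hx y hy.1 (hBot x hxA y) ?_
        have : (insert y (T.erase x)) ∩ A = T ∩ A := by
          ext z
          simp only [Finset.mem_inter, Finset.mem_insert, Finset.mem_erase]
          constructor
          · rintro ⟨rfl | ⟨hzx, hzT⟩, hzA⟩
            · exact absurd hzA hy.2
            · exact ⟨hzT, hzA⟩
          · rintro ⟨hzT, hzA⟩
            refine ⟨Or.inr ⟨fun h => ?_, hzT⟩, hzA⟩
            subst h; exact hxA hzA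
        rw [this]; exact hcA
      · obtain ⟨y, hy⟩ := hST
        have hyA : y ∈ A := by
          by_contra hyA
          exact hB ⟨y, Finset.mem_sdiff.mpr ⟨hy, hyA⟩⟩
        have hyST := Finset.mem_sdiff.mp hy
        refine step x hx y hy (hBot x hxA y) ?_
        have heq : (insert y (T.erase x)) ∩ A = insert y (T ∩ A) := by
          ext z
          simp only [Finset.mem_inter, Finset.mem_insert, Finset.mem_erase]
          constructor
          · rintro ⟨rfl | ⟨hzx, hzT⟩, hzA⟩
            · exact Or.inl rfl
            · exact Or.inr ⟨hzT, hzA⟩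
          · rintro (rfl | ⟨hzT, hzA⟩)
            · exact ⟨Or.inl rfl, hyA⟩
            · refine ⟨Or.inr ⟨fun h => ?_, hzT⟩, hzA⟩
              subst h; exact hxA hzA
        have hss : T ∩ A ⊂ S ∩ A := by
          refine ⟨hTAS, fun h => ?_⟩
          have : y ∈ T ∩ A := h (Finset.mem_inter.mpr ⟨hyST.1, hyA⟩)
          exact hyST.2 (Finset.mem_inter.mp this).1
        rw [heq, Finset.card_insert_of_notMem
          (fun h => hyST.2 (Finset.mem_inter.mp h).1)]
        exact Finset.card_lt_card hss


set_option maxHeartbeats 1000000 in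
/-- a complete simple game on `n` voters with exactly two
equivalence classes of voters has critical threshold value at most `√n + 1`. -/
theorem complete_simple_game_two_classes_bound (n : ℕ)
    (χ : Finset (Fin n) → Bool) (hχ : SimpleGame χ)
    (hcomplete : ∀ i j : Fin n, Desirable χ i j ∨ Desirable χ j i)
    (htwo : ∃ i j : Fin n, ¬ EquivVoters χ i j)
    (hatmosttwo : ∀ i j k : Fin n,
      EquivVoters χ i j ∨ EquivVoters χ j k ∨ EquivVoters χ i k) :
    mu χ ≤ Real.sqrt n + 1 ∧ RoughlyWeighted χ (Real.sqrt n + 1) := by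
  classical
  obtain ⟨hempty, huniv, hmono⟩ := hχ
  have hn : 1 ≤ n := by
    by_contra h
    have hn0 : n = 0 := by omega
    subst hn0
    have he : (Finset.univ : Finset (Fin 0)) = ∅ := rfl
    rw [he, hempty] at huniv
    exact absurd huniv (by simp)
  set K : ℝ := Real.sqrt n with hKdef
  have hK0 : 0 ≤ K := Real.sqrt_nonneg _
  have hK1 : 1 ≤ K := by
    rw [hKdef, show (1:ℝ) = Real.sqrt 1 by simp]
    exact Real.sqrt_le_sqrt (by exact_mod_cast hn)
  have hKK : K * K = n := Real.mul_self_sqrt (by positivity)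
  -- the top class
  set A : Finset (Fin n) := Finset.univ.filter (fun i => ∀ j, Desirable χ i j) with hAdef
  have hTop : ∀ i ∈ A, ∀ j, Desirable χ i j := by
    intro i hi
    rw [hAdef, Finset.mem_filter] at hi
    exact hi.2
  have topOrDes : ∀ i j : Fin n, ¬ Desirable χ i j → ∀ m, Desirable χ j m := by
    intro i j hij m
    rcases hatmosttwo i j m with h | h | h
    · exact absurd h.1 hij
    · exact h.1
    · have hji : Desirable χ j i := (hcomplete i j).resolve_left hij
      exact desirable_trans hji h.1
  have hBot : ∀ x ∉ A, ∀ y, Desirable χ y x := by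
    intro x hx y
    by_contra hyx
    have hxtop : ∀ m, Desirable χ x m := topOrDes y x hyx
    exact hx (by rw [hAdef, Finset.mem_filter]; exact ⟨Finset.mem_univ _, hxtop⟩)
  -- minimize over winning coalitions
  have hwin_ne : (Finset.univ.filter (fun S : Finset (Fin n) => χ S = true)).Nonempty :=
    ⟨Finset.univ, by simp [huniv]⟩
  obtain ⟨T, hTmem, hTmin⟩ := Finset.exists_min_image _
    (fun S : Finset (Fin n) => K * ((S ∩ A).card : ℝ) + (S.card : ℝ)) hwin_ne
  have hT : χ T = true := (Finset.mem_filter.mp hTmem).2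
  set φ : ℝ := K * ((T ∩ A).card : ℝ) + (T.card : ℝ) with hφdef
  have hTmin' : ∀ S : Finset (Fin n), χ S = true →
      φ ≤ K * ((S ∩ A).card : ℝ) + (S.card : ℝ) := by
    intro S hS
    exact hTmin S (Finset.mem_filter.mpr ⟨Finset.mem_univ _, hS⟩)
  have hTne : T ≠ ∅ := fun h => by rw [h, hempty] at hT; exact absurd hT (by simp)
  have hTcard : 1 ≤ T.card := Finset.card_pos.mpr (Finset.nonempty_iff_ne_empty.mpr hTne)
  have hφ1 : 1 ≤ φ := by
    have h1 : (0:ℝ) ≤ K * ((T ∩ A).card : ℝ) := by positivity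
    have h2 : (1:ℝ) ≤ (T.card : ℝ) := by exact_mod_cast hTcard
    rw [hφdef]; linarith
  have hφpos : 0 < φ := lt_of_lt_of_le one_pos hφ1
  -- the weights
  set w : Fin n → ℝ := fun i => if i ∈ A then (K + 1) / φ else 1 / φ with hwdef
  have hval : ∀ S : Finset (Fin n),
      ∑ i ∈ S, w i = (K * ((S ∩ A).card : ℝ) + (S.card : ℝ)) / φ := by
    intro S
    have hstep : ∀ i ∈ S, w i = (if i ∈ A then K / φ else 0) + 1 / φ := by
      intro i _
      by_cases hi : i ∈ A
      · simp only [hwdef, if_pos hi]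
        rw [← add_div]
      · simp only [hwdef, if_neg hi]
        rw [zero_add]
    rw [Finset.sum_congr rfl hstep, Finset.sum_add_distrib, Finset.sum_const,
      ← Finset.sum_filter]
    rw [Finset.sum_const, Finset.filter_mem_eq_inter]
    rw [nsmul_eq_mul, nsmul_eq_mul]
    field_simp
  have hRW : RoughlyWeighted χ (K + 1) := by
    refine ⟨w, ?_, ?_⟩
    · intro S hS
      rw [hval, le_div_iff₀ hφpos, one_mul]
      exact hTmin' S hS
    · intro S hS
      rw [hval, div_le_iff₀ hφpos]
      have haS : ((S ∩ A).card : ℝ) ≤ (S.card : ℝ) := by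
        exact_mod_cast Finset.card_le_card (Finset.inter_subset_left)
      have hSn : (S.card : ℝ) ≤ (n : ℝ) := by
        have h := Finset.card_le_univ S
        rw [Fintype.card_fin] at h
        exact_mod_cast h
      by_cases hcase : (T ∩ A).card ≤ (S ∩ A).card
      · -- then S.card < T.card (else S would be winning)
        have hlt : S.card < T.card := by
          by_contra hle
          push_neg at hle
          have hw := winning_mono_counts hmono A hTop hBot (T \ S).card T S rfl hT hle hcase
          rw [hw] at hS; exact absurd hS (by simp)
        have h1 : (S.card : ℝ) + 1 ≤ (T.card : ℝ) := by exact_mod_cast hlt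
        have h2 : (T.card : ℝ) ≤ φ := by
          have h0 : (0:ℝ) ≤ K * ((T ∩ A).card : ℝ) := by positivity
          rw [hφdef]; linarith
        nlinarith
      · push_neg at hcase
        have h1 : ((S ∩ A).card : ℝ) + 1 ≤ ((T ∩ A).card : ℝ) := by exact_mod_cast hcase
        have h2 : (0:ℝ) ≤ ((S ∩ A).card : ℝ) := by positivity
        have h3 : (1:ℝ) ≤ (T.card : ℝ) := by exact_mod_cast hTcard
        rw [hφdef]
        nlinarith
  constructor
  · apply csInf_le
    · exact ⟨1, fun α hα => hα.1⟩
    · exact ⟨by linarith, hRW⟩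
  · exact hRW
end
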